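/- Let n ≥ 1. For every z ∈ ℂ: C(z+1,n) + Σ_{j=0}^{n−1} G_{n,j}(z)·B_{j+1}/(j+1) = Σ_{j=0}^{n−1} G_{n,j}(z)·B_{j+1}(z+1)/(j+1). -/
import Mathlib


open scoped BigOperators

noncomputable section

/-- Generalized binomial coefficient `C(x,m) = x(x-1)⋯(x-m+1)/m!`. -/
def genBinom (x : ℂ) (m : ℕ) : ℂ := (∏ i ∈ Finset.range m, (x - i)) / m.factorial

/-- Bernoulli number `B_r` (with `B_1 = -1/2`), as a complex number. -/
def BC (r : ℕ) : ℂ := ((bernoulli r : ℚ) : ℂ)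

/-- Bernoulli polynomial `B_m(x)` evaluated at a complex number. -/
def BPC (m : ℕ) (x : ℂ) : ℂ := Polynomial.aeval x (Polynomial.bernoulli m)

/-- `G_{n,j}(z)`: the coefficient of `u^j` in `C(z−u, n−1)`. -/
def Gcoef (n j : ℕ) (z : ℂ) : ℂ :=
  iteratedDeriv j (fun u => genBinom (z - u) (n-1)) 0 / j.factorial

open Polynomial in
/-- The polynomial (in `u`) whose evaluation at `u` is `genBinom (z-u) m`. -/
def GP (z : ℂ) (m : ℕ) : Polynomial ℂ :=
  Polynomial.C ((m.factorial : ℂ)⁻¹) * ∏ i ∈ Finset.range m, (Polynomial.C z - Polynomial.C (i:ℂ) - Polynomial.X)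

open Polynomial in
lemma GP_eval (z : ℂ) (m : ℕ) (u : ℂ) : (GP z m).eval u = genBinom (z - u) m := by
  rw [GP, genBinom, eval_mul, eval_C, eval_prod, div_eq_inv_mul]
  congr 1
  exact Finset.prod_congr rfl (fun i _ => by simp; ring)

open Polynomial in
lemma iteratedDeriv_polyEval (j : ℕ) (p : Polynomial ℂ) :
    iteratedDeriv j (fun u : ℂ => p.eval u) = fun u => (derivative^[j] p).eval u := by
  induction j generalizing p with
  | zero => simp
  | succ k ih =>
    rw [iteratedDeriv_succ', Function.iterate_succ_apply]
    rw [show _root_.deriv (fun u : ℂ => p.eval u) = fun u => (derivative p).eval u from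
      funext fun x => p.deriv]
    exact ih (derivative p)

open Polynomial in
lemma Gcoef_eq_coeff (n j : ℕ) (z : ℂ) : Gcoef n j z = (GP z (n-1)).coeff j := by
  have h1 : (fun u : ℂ => genBinom (z - u) (n-1)) = fun u => (GP z (n-1)).eval u :=
    funext fun u => (GP_eval z (n-1) u).symm
  rw [Gcoef, h1, iteratedDeriv_polyEval]
  simp only []
  rw [← coeff_zero_eq_eval_zero, coeff_iterate_derivative]
  simp [Nat.descFactorial_self, smul_eq_mul]
  rw [mul_comm, mul_div_assoc, div_self (by exact_mod_cast j.factorial_ne_zero), mul_one]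

open Polynomial in
/-- Bernoulli polynomial over ℂ. -/
def BPoly (m : ℕ) : Polynomial ℂ := (Polynomial.bernoulli m).map (algebraMap ℚ ℂ)

open Polynomial in
lemma BPC_eq_eval (m : ℕ) (x : ℂ) : BPC m x = (BPoly m).eval x := by
  rw [BPC, BPoly, eval_map, aeval_def]

open Polynomial in
lemma BPoly_eval_zero (m : ℕ) : (BPoly m).eval 0 = BC m := by
  rw [BPoly, eval_zero_map, Polynomial.bernoulli_eval_zero, BC]
  rfl

open Polynomial in
lemma bernoulli_comp_rat (m : ℕ) :
    (Polynomial.bernoulli (m+1)).comp (X + 1) =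
      Polynomial.bernoulli (m+1) + Polynomial.C ((m:ℚ)+1) * X ^ m := by
  apply Polynomial.funext
  intro x
  simp only [eval_comp, eval_add, eval_X, eval_one, eval_mul, eval_C, eval_pow]
  rw [show x + 1 = 1 + x by ring, Polynomial.bernoulli_eval_one_add]
  push_cast
  ring

open Polynomial in
lemma BPoly_comp (m : ℕ) :
    (BPoly (m+1)).comp (X + 1) = BPoly (m+1) + C ((m:ℂ)+1) * X ^ m := by
  have h := congrArg (Polynomial.map (algebraMap ℚ ℂ)) (bernoulli_comp_rat m)
  rw [Polynomial.map_comp] at h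
  simp only [Polynomial.map_add, Polynomial.map_mul, Polynomial.map_pow, Polynomial.map_one,
    map_X, map_C] at h
  unfold BPoly
  rw [h]
  norm_num

open Polynomial in
lemma genBinom_pascal (x : ℂ) (m : ℕ) :
    genBinom (x+1) (m+1) - genBinom x (m+1) = genBinom x m := by
  unfold genBinom
  have h1 : ∏ i ∈ Finset.range (m+1), (x + 1 - (i:ℂ)) =
      (∏ i ∈ Finset.range m, (x - (i:ℂ))) * (x + 1) := by
    rw [Finset.prod_range_succ']
    congr 1
    · exact Finset.prod_congr rfl (fun i _ => by push_cast; ring)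
    · simp
  have h2 : ∏ i ∈ Finset.range (m+1), (x - (i:ℂ)) =
      (∏ i ∈ Finset.range m, (x - (i:ℂ))) * (x - m) := Finset.prod_range_succ _ _
  rw [h1, h2, Nat.factorial_succ]
  have hm1 : ((m:ℂ)+1) ≠ 0 := by exact_mod_cast Nat.cast_add_one_ne_zero (R := ℂ) m
  have hm2 : ((m.factorial : ℕ) : ℂ) ≠ 0 := Nat.cast_ne_zero.mpr m.factorial_ne_zero
  push_cast
  field_simp
  ring

theorem genBinom_add_sum_bernoulli (n : ℕ) (hn : 1 ≤ n) (z : ℂ) :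
    genBinom (z+1) n + ∑ j ∈ Finset.range n, Gcoef n j z * BC (j+1) / ((j:ℂ)+1) =
      ∑ j ∈ Finset.range n, Gcoef n j z * BPC (j+1) (z+1) / ((j:ℂ)+1) := by
  classical
  open Polynomial in
  -- the polynomials
  set Q : Polynomial ℂ := ∑ j ∈ Finset.range n, C (Gcoef n j z / ((j:ℂ)+1)) * BPoly (j+1) with hQ
  set R : Polynomial ℂ := GP (z+1) n with hR
  set P : Polynomial ℂ := GP z (n-1) with hP
  -- Q.comp (X+1) - Q = P
  have hQcomp : Q.comp (X + 1) - Q = P := by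
    have hdeg : P.natDegree < n := by
      have h1 : P.natDegree ≤ n - 1 := by
        rw [hP, GP]
        refine (natDegree_mul_le).trans ?_
        simp only [natDegree_C, zero_add]
        refine (natDegree_prod_le _ _).trans ?_
        calc ∑ i ∈ Finset.range (n-1), (C z - C (i:ℂ) - X).natDegree
            ≤ ∑ _i ∈ Finset.range (n-1), 1 := by
              refine Finset.sum_le_sum fun i _ => ?_
              refine (natDegree_sub_le _ _).trans ?_
              refine max_le ((natDegree_sub_le _ _).trans ?_) (by simp [natDegree_X])
              simp
          _ = n - 1 := by simp
      omega
    have hPsum : P = ∑ j ∈ Finset.range n, C (Gcoef n j z) * X ^ j := by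
      conv_lhs => rw [P.as_sum_range' n hdeg]
      refine Finset.sum_congr rfl fun j _ => ?_
      rw [Gcoef_eq_coeff, ← hP, C_mul_X_pow_eq_monomial]
    rw [hQ, hPsum]
    rw [Polynomial.sum_comp, ← Finset.sum_sub_distrib]
    refine Finset.sum_congr rfl fun j _ => ?_
    rw [mul_comp, C_comp, BPoly_comp]
    have hj : ((j:ℂ)+1) ≠ 0 := by
      have := Nat.cast_add_one_ne_zero (R := ℂ) j
      exact_mod_cast this
    rw [mul_add, add_sub_cancel_left, ← mul_assoc, ← C_mul, div_mul_cancel₀ _ hj]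
  -- R - R.comp (X+1) = P
  have hRcomp : R - R.comp (X + 1) = P := by
    apply Polynomial.funext
    intro u
    simp only [eval_sub, eval_comp, eval_add, eval_X, eval_one]
    rw [hR, hP, GP_eval, GP_eval, GP_eval]
    obtain ⟨m, rfl⟩ : ∃ m, n = m + 1 := ⟨n - 1, by omega⟩
    simp only [Nat.add_sub_cancel]
    have := genBinom_pascal (z - u) m
    rw [show z + 1 - u = z - u + 1 by ring]
    rw [show z + 1 - (u + 1) = z - u by ring]
    exact this
  -- D := Q + R is invariant under comp (X+1), hence constant
  set D : Polynomial ℂ := Q + R with hD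
  have hDcomp : D.comp (X + 1) = D := by
    have : D.comp (X+1) - D = (Q.comp (X+1) - Q) - (R - R.comp (X+1)) := by
      rw [hD, add_comp]; ring
    rw [hQcomp, hRcomp, sub_self] at this
    linear_combination (norm := ring_nf) this
  have hconst : ∀ k : ℕ, D.eval (k : ℂ) = D.eval 0 := by
    intro k
    induction k with
    | zero => simp
    | succ k ih =>
      have : D.eval ((k:ℂ) + 1) = D.eval (k:ℂ) := by
        conv_rhs => rw [← hDcomp]
        rw [eval_comp]
        simp
      push_cast
      rw [this, ih]
  have hDconst : D = C (D.eval 0) := by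
    have hz : D - C (D.eval 0) = 0 := by
      apply Polynomial.eq_zero_of_infinite_isRoot
      exact Set.infinite_of_injective_forall_mem (f := fun k : ℕ => (k : ℂ))
        Nat.cast_injective (fun k => by simp [IsRoot, hconst k])
    linear_combination (norm := ring_nf) hz
  have key : D.eval (z + 1) = D.eval 0 := by rw [hDconst]; simp
  -- evaluate
  have hRz : R.eval (z+1) = 0 := by
    rw [hR, GP_eval, sub_self, genBinom]
    rw [Finset.prod_eq_zero (Finset.mem_range.mpr (by omega : 0 < n))]
    · simp
    · simp
  have hR0 : R.eval 0 = genBinom (z+1) n := by rw [hR, GP_eval, sub_zero]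
  have hQev : ∀ u : ℂ, Q.eval u =
      ∑ j ∈ Finset.range n, Gcoef n j z / ((j:ℂ)+1) * BPC (j+1) u := by
    intro u
    rw [hQ, eval_finset_sum]
    exact Finset.sum_congr rfl fun j _ => by rw [eval_mul, eval_C, BPC_eq_eval]
  have hQ0 : Q.eval 0 = ∑ j ∈ Finset.range n, Gcoef n j z * BC (j+1) / ((j:ℂ)+1) := by
    rw [hQ, eval_finset_sum]
    refine Finset.sum_congr rfl fun j _ => ?_
    rw [eval_mul, eval_C, BPoly_eval_zero]
    ring
  rw [hD] at key
  simp only [eval_add] at key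
  rw [hRz, hR0, hQ0, hQev (z+1)] at key
  simp only [add_zero] at key
  rw [add_comm, ← key]
  exact Finset.sum_congr rfl fun j _ => by ring

end
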